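/- Let S be a maximal triangular subalgebra of B(H), let δ : S → B(H) be a bounded derivation, and let p ∈ lat(S) with p ≠ 0 and p ≠ 1 (note p ∈ S since lat(S) ⊆ S ∩ S*, so a p ∈ S for every a ∈ S). Then there exists b₂ ∈ B(H) with ‖b₂‖ ≤ 2‖δ‖ such that δ(a p) = b₂ (a p) − (a p) b₂ for all a ∈ S; that is, b₂ implements δ on the algebra S p = p S p. -/

import Mathlib

set_option maxHeartbeats 1000000
set_option synthInstance.maxHeartbeats 400000

open ContinuousLinearMap in
/-- The diagonal `S ∩ S*` of a subalgebra of `B(H)`. -/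
def diagonal {H : Type*} [NormedAddCommGroup H] [InnerProductSpace ℂ H] [CompleteSpace H]
    (S : Subalgebra ℂ (H →L[ℂ] H)) : Set (H →L[ℂ] H) :=
  {a | a ∈ S ∧ adjoint a ∈ S}

/-- A set of operators is maximal abelian in `B(H)` if it is commutative and contains
every operator commuting with all of its members. -/
def IsMaxAbelian {H : Type*} [NormedAddCommGroup H] [InnerProductSpace ℂ H]
    (D : Set (H →L[ℂ] H)) : Prop :=
  (∀ a ∈ D, ∀ b ∈ D, a * b = b * a) ∧
  (∀ b : H →L[ℂ] H, (∀ a ∈ D, a * b = b * a) → b ∈ D)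

/-- A (unital) subalgebra of `B(H)` is triangular if its diagonal `S ∩ S*` is
maximal abelian in `B(H)`. -/
def IsTriangular {H : Type*} [NormedAddCommGroup H] [InnerProductSpace ℂ H] [CompleteSpace H]
    (S : Subalgebra ℂ (H →L[ℂ] H)) : Prop :=
  IsMaxAbelian (diagonal S)

/-- `S` is maximal triangular if it is triangular and not properly contained in any
other triangular subalgebra. -/
def IsMaxTriangular {H : Type*} [NormedAddCommGroup H] [InnerProductSpace ℂ H] [CompleteSpace H]
    (S : Subalgebra ℂ (H →L[ℂ] H)) : Prop :=
  IsTriangular S ∧ ∀ T : Subalgebra ℂ (H →L[ℂ] H), IsTriangular T → S ≤ T → S = T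

open ContinuousLinearMap in
/-- `p ∈ lat S`: `p` is an orthogonal projection with `a p = p a p` for all `a ∈ S`. -/
def InLat {H : Type*} [NormedAddCommGroup H] [InnerProductSpace ℂ H] [CompleteSpace H]
    (S : Subalgebra ℂ (H →L[ℂ] H)) (p : H →L[ℂ] H) : Prop :=
  p * p = p ∧ adjoint p = p ∧ ∀ a ∈ S, a * p = p * a * p

/-- A bounded derivation from `S` into `B(H)`: a continuous linear map obeying the
Leibniz product rule on `S`. -/
def IsDerivation {H : Type*} [NormedAddCommGroup H] [InnerProductSpace ℂ H] [CompleteSpace H]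
    (S : Subalgebra ℂ (H →L[ℂ] H)) (δ : S →L[ℂ] (H →L[ℂ] H)) : Prop :=
  ∀ a b : S, δ (a * b) = δ a * (b : H →L[ℂ] H) + (a : H →L[ℂ] H) * δ b

open ContinuousLinearMap in
theorem corner_mem' {H : Type*} [NormedAddCommGroup H] [InnerProductSpace ℂ H] [CompleteSpace H]
    {S : Subalgebra ℂ (H →L[ℂ] H)} (hS : IsMaxTriangular S)
    {p : H →L[ℂ] H} (hp : InLat S p) (hpS : p ∈ S) (x : H →L[ℂ] H) :
    p * x * (1 - p) ∈ S := by
  obtain ⟨hpp, hpa, hlat⟩ := hp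
  set q : H →L[ℂ] H := 1 - p with hqdef
  have hqS : q ∈ S := sub_mem (one_mem S) hpS
  have Pp : ∀ v, p (p v) = p v := fun v => by
    simpa [ContinuousLinearMap.mul_apply] using DFunLike.congr_fun hpp v
  have Pq : ∀ v, q v = v - p v := fun v => by
    simp [hqdef, ContinuousLinearMap.sub_apply]
  have Ppq : ∀ v, p (q v) = 0 := fun v => by simp [Pq, map_sub, Pp]
  have Pqp : ∀ v, q (p v) = 0 := fun v => by simp [Pq, Pp]
  have Plat : ∀ s ∈ S, ∀ v, s (p v) = p (s (p v)) := fun s hs v => by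
    simpa [ContinuousLinearMap.mul_apply] using DFunLike.congr_fun (hlat s hs) v
  have Pqsp : ∀ s ∈ S, ∀ v, q (s (p v)) = 0 := fun s hs v => by
    rw [Plat s hs, Pq, Pp]; simp [Pp]
  -- the enlarged algebra T = S + p B(H) q
  let T : Subalgebra ℂ (H →L[ℂ] H) :=
  { carrier := {t | ∃ s ∈ S, ∃ y : H →L[ℂ] H, t = s + p * y * q}
    zero_mem' := ⟨0, zero_mem S, 0, by simp⟩
    one_mem' := ⟨1, one_mem S, 0, by simp⟩
    add_mem' := by
      rintro t t' ⟨s, hs, y, rfl⟩ ⟨s', hs', y', rfl⟩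
      exact ⟨s + s', add_mem hs hs', y + y', by noncomm_ring⟩
    algebraMap_mem' := fun c => ⟨algebraMap ℂ _ c, S.algebraMap_mem c, 0, by simp⟩
    mul_mem' := by
      rintro t t' ⟨s, hs, y, rfl⟩ ⟨s', hs', y', rfl⟩
      refine ⟨s * s', mul_mem hs hs', s * (p * y') + y * (q * s'), ?_⟩
      ext v
      have h1 : q (s' (p (y' (q v)))) = 0 := Pqsp s' hs' _
      have h2 : q (s' v) = q (s' (q v)) := by
        rw [Pq v, map_sub, map_sub, Pqsp s' hs']; simp
      simp only [ContinuousLinearMap.mul_apply, ContinuousLinearMap.add_apply, map_add,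
        ContinuousLinearMap.add_apply]
      rw [Pqp, map_zero, map_zero, Plat s hs, h2, Pp]
      abel }
  have hST : S ≤ T := fun s hs => ⟨s, hs, 0, by simp⟩
  -- every element of T is "upper triangular": q t p = 0
  have hTqp : ∀ u ∈ T, q * u * p = 0 := by
    rintro u ⟨s, hs, y, rfl⟩
    ext v
    simp only [ContinuousLinearMap.mul_apply, ContinuousLinearMap.add_apply, map_add,
      ContinuousLinearMap.zero_apply]
    rw [Pqsp s hs, Pqp]
    simp
  -- an element of T with vanishing upper corner is in S
  have Pqq : ∀ v, q (q v) = q v := fun v => by rw [Pq (q v), Ppq, sub_zero]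
  have hmem : ∀ u ∈ T, p * u * q = 0 → u ∈ S := by
    rintro u ⟨s, hs, y, rfl⟩ h0
    have key : p * y * q = -(p * s * q) := by
      ext v
      have h3 := DFunLike.congr_fun h0 v
      simp only [ContinuousLinearMap.mul_apply, ContinuousLinearMap.add_apply, map_add,
        ContinuousLinearMap.zero_apply, ContinuousLinearMap.neg_apply] at h3 ⊢
      rw [Pqq, Pp] at h3
      exact eq_neg_of_add_eq_zero_left ((add_comm _ _).trans h3)
    rw [key]
    refine (show s + -(p * s * q) ∈ S from add_mem hs (neg_mem (mul_mem (mul_mem hpS hs) hqS)))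
  have hps : star p = p := by rw [star_eq_adjoint, hpa]
  have hqs2 : star q = q := by rw [hqdef, star_sub, star_one, hps]
  have hdiag : diagonal T = diagonal S := by
    ext t
    constructor
    · rintro ⟨htT, htaT⟩
      have h0 : q * star t * p = 0 := by
        rw [star_eq_adjoint]; exact hTqp _ htaT
      have h1 : p * t * q = 0 := by
        calc p * t * q = star (q * star t * p) := by
              simp [star_mul, hps, hqs2, mul_assoc]
          _ = 0 := by rw [h0, star_zero]
      have h0' : q * t * p = 0 := hTqp _ htT
      have h2 : p * star t * q = 0 := by
        calc p * star t * q = star (q * t * p) := by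
              simp [star_mul, hps, hqs2, mul_assoc]
          _ = 0 := by rw [h0', star_zero]
      refine ⟨hmem _ htT h1, hmem _ ?_ ?_⟩
      · exact htaT
      · rw [← star_eq_adjoint]; exact h2
    · rintro ⟨h1, h2⟩
      exact ⟨hST h1, hST h2⟩
  have hTtri : IsTriangular T := by
    have : IsMaxAbelian (diagonal T) := hdiag ▸ hS.1
    exact this
  have hfin : S = T := hS.2 T hTtri hST
  rw [hfin]
  exact ⟨0, zero_mem S, x, by simp⟩

open ContinuousLinearMap in
/-- Norm bound for the off-diagonal implementing operator. -/
theorem bprime_norm' {H : Type*} [NormedAddCommGroup H] [InnerProductSpace ℂ H]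
    [CompleteSpace H] {p : H →L[ℂ] H} (hpp : p * p = p) (hpa : adjoint p = p)
    (dp : H →L[ℂ] H) (C : ℝ) (hdp : ‖dp‖ ≤ C) :
    ‖(1 - p) * dp * p - p * dp * (1 - p)‖ ≤ C := by
  set q : H →L[ℂ] H := 1 - p with hqdef
  have hC : 0 ≤ C := le_trans (norm_nonneg dp) hdp
  have Pp : ∀ v, p (p v) = p v := fun v => by
    simpa [ContinuousLinearMap.mul_apply] using DFunLike.congr_fun hpp v
  have Pq : ∀ v, q v = v - p v := fun v => by simp [hqdef]
  have Ppq : ∀ v, p (q v) = 0 := fun v => by simp [Pq, map_sub, Pp]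
  have Pqp : ∀ v, q (p v) = 0 := fun v => by simp [Pq, Pp]
  have Pqq : ∀ v, q (q v) = q v := fun v => by rw [Pq (q v), Ppq, sub_zero]
  have Ip : ∀ (v w : H), (inner ℂ (p v) w : ℂ) = inner ℂ v (p w) := fun v w => by
    have := adjoint_inner_left p w v
    rwa [hpa] at this
  have Iq : ∀ (v w : H), (inner ℂ (q v) w : ℂ) = inner ℂ v (q w) := fun v w => by
    simp only [Pq, inner_sub_left, inner_sub_right, Ip]
  have normp : ∀ v, ‖p v‖ ≤ ‖v‖ := by
    intro v
    have h1 : (inner ℂ (p v) (p v) : ℂ) = inner ℂ v (p v) := by rw [Ip, Pp]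
    have h2 : ‖p v‖ ^ 2 = ‖(inner ℂ v (p v) : ℂ)‖ := by
      rw [← h1, inner_self_eq_norm_sq_to_K]
      simp [norm_pow]
    have h3 : ‖(inner ℂ v (p v) : ℂ)‖ ≤ ‖v‖ * ‖p v‖ := norm_inner_le_norm _ _
    nlinarith [norm_nonneg (p v), norm_nonneg v]
  have normq : ∀ v, ‖q v‖ ≤ ‖v‖ := by
    intro v
    have h1 : (inner ℂ (q v) (q v) : ℂ) = inner ℂ v (q v) := by rw [Iq, Pqq]
    have h2 : ‖q v‖ ^ 2 = ‖(inner ℂ v (q v) : ℂ)‖ := by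
      rw [← h1, inner_self_eq_norm_sq_to_K]
      simp [norm_pow]
    have h3 : ‖(inner ℂ v (q v) : ℂ)‖ ≤ ‖v‖ * ‖q v‖ := norm_inner_le_norm _ _
    nlinarith [norm_nonneg (q v), norm_nonneg v]
  apply opNorm_le_bound _ hC
  intro v
  have happ : (q * dp * p - p * dp * q) v = q (dp (p v)) - p (dp (q v)) := by
    simp [ContinuousLinearMap.mul_apply, ContinuousLinearMap.sub_apply]
  rw [happ]
  set u := q (dp (p v)) with hu0
  set w := p (dp (q v)) with hw0
  have horth : (inner ℂ u w : ℂ) = 0 := by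
    rw [hu0, Iq, hw0, Pqp, inner_zero_right]
  have hsq : ‖u - w‖ ^ 2 = ‖u‖ ^ 2 + ‖w‖ ^ 2 := by
    rw [norm_sub_sq (𝕜 := ℂ), horth]; simp
  have hu : ‖u‖ ≤ C * ‖p v‖ := by
    calc ‖u‖ ≤ ‖dp (p v)‖ := normq _
      _ ≤ ‖dp‖ * ‖p v‖ := le_opNorm _ _
      _ ≤ C * ‖p v‖ := mul_le_mul_of_nonneg_right hdp (norm_nonneg _)
  have hw : ‖w‖ ≤ C * ‖q v‖ := by
    calc ‖w‖ ≤ ‖dp (q v)‖ := normp _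
      _ ≤ ‖dp‖ * ‖q v‖ := le_opNorm _ _
      _ ≤ C * ‖q v‖ := mul_le_mul_of_nonneg_right hdp (norm_nonneg _)
  have hpyth : ‖p v‖ ^ 2 + ‖q v‖ ^ 2 = ‖v‖ ^ 2 := by
    have hiz : (inner ℂ (p v) (q v) : ℂ) = 0 := by rw [Ip, Ppq, inner_zero_right]
    have hsum : p v + q v = v := by rw [Pq]; abel
    have := norm_add_sq (𝕜 := ℂ) (p v) (q v)
    rw [hsum, hiz] at this
    simp at this
    linarith
  have hu2 : ‖u‖ ^ 2 ≤ (C * ‖p v‖) ^ 2 := pow_le_pow_left₀ (norm_nonneg u) hu 2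
  have hw2 : ‖w‖ ^ 2 ≤ (C * ‖q v‖) ^ 2 := pow_le_pow_left₀ (norm_nonneg w) hw 2
  have h1 : ‖u - w‖ ^ 2 ≤ (C * ‖v‖) ^ 2 := by nlinarith [sq_nonneg C]
  have h2 := Real.sqrt_le_sqrt h1
  rwa [Real.sqrt_sq (norm_nonneg _), Real.sqrt_sq (by positivity)] at h2

open ContinuousLinearMap in
/-- Norm of a projection applied to a vector. -/
theorem proj_apply_norm_le' {H : Type*} [NormedAddCommGroup H] [InnerProductSpace ℂ H]
    [CompleteSpace H] {p : H →L[ℂ] H} (hpp : p * p = p) (hpa : adjoint p = p) (v : H) :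
    ‖p v‖ ≤ ‖v‖ := by
  have Pp : ∀ v, p (p v) = p v := fun v => by
    simpa [ContinuousLinearMap.mul_apply] using DFunLike.congr_fun hpp v
  have Ip : ∀ (v w : H), (inner ℂ (p v) w : ℂ) = inner ℂ v (p w) := fun v w => by
    have := adjoint_inner_left p w v
    rwa [hpa] at this
  have h1 : (inner ℂ (p v) (p v) : ℂ) = inner ℂ v (p v) := by rw [Ip, Pp]
  have h2 : ‖p v‖ ^ 2 = ‖(inner ℂ v (p v) : ℂ)‖ := by
    rw [← h1, inner_self_eq_norm_sq_to_K]
    simp [norm_pow]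
  have h3 : ‖(inner ℂ v (p v) : ℂ)‖ ≤ ‖v‖ * ‖p v‖ := norm_inner_le_norm _ _
  nlinarith [norm_nonneg (p v), norm_nonneg v]

open ContinuousLinearMap in
/-- The corner decomposition of `δ(ap)`. -/
theorem decomp' {H : Type*} [NormedAddCommGroup H] [InnerProductSpace ℂ H]
    [CompleteSpace H] {S : Subalgebra ℂ (H →L[ℂ] H)}
    (δ : S →L[ℂ] (H →L[ℂ] H)) (hδ : IsDerivation S δ)
    {p : H →L[ℂ] H} (hpS : p ∈ S) (hpp : p * p = p)
    (hlat : ∀ a ∈ S, a * p = p * a * p) (a : S) (v : H) :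
    (δ (a * ⟨p, hpS⟩)) v =
      p ((δ (a * ⟨p, hpS⟩)) (p v))
      + (1 - p) ((δ (⟨p, hpS⟩ : S)) (((a : H →L[ℂ] H) * p) v))
      + ((a : H →L[ℂ] H) * p) ((δ (⟨p, hpS⟩ : S)) ((1 - p) v)) := by
  set q : H →L[ℂ] H := 1 - p with hqdef
  set pe : S := (⟨p, hpS⟩ : S) with hpe
  have hpec : (pe : H →L[ℂ] H) = p := rfl
  set co : H →L[ℂ] H := (a : H →L[ℂ] H) * p with hco
  set d : H →L[ℂ] H := δ (a * pe) with hd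
  set dp : H →L[ℂ] H := δ pe with hdp
  have Pp : ∀ v, p (p v) = p v := fun v => by
    simpa [ContinuousLinearMap.mul_apply] using DFunLike.congr_fun hpp v
  have Pq : ∀ v, q v = v - p v := fun v => by simp [hqdef]
  have Ppq : ∀ v, p (q v) = 0 := fun v => by simp [Pq, map_sub, Pp]
  have Pqp : ∀ v, q (p v) = 0 := fun v => by simp [Pq, Pp]
  have Plat : ∀ s : S, ∀ v, (s : H →L[ℂ] H) (p v) = p ((s : H →L[ℂ] H) (p v)) :=
    fun s v => by
      simpa [ContinuousLinearMap.mul_apply] using DFunLike.congr_fun (hlat s s.2) v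
  have Pco : ∀ v, co v = (a : H →L[ℂ] H) (p v) := fun v => by
    rw [hco, ContinuousLinearMap.mul_apply]
  have Pcp : ∀ v, co (p v) = co v := fun v => by rw [Pco, Pp, Pco]
  have hcoe : ((a * pe : S) : H →L[ℂ] H) = co := by
    rw [hco]; simp [hpec]
  have hcc1 : (a * pe) * pe = a * pe := by
    apply Subtype.ext
    simp only [MulMemClass.coe_mul, hpec]
    rw [mul_assoc, hpp]
  have hcc2 : pe * (a * pe) = a * pe := by
    apply Subtype.ext
    simp only [MulMemClass.coe_mul, hpec]
    rw [← mul_assoc]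
    exact (hlat (a : H →L[ℂ] H) a.2).symm
  have D1 : d = d * p + co * dp := by
    have h0 := hδ (a * pe) pe
    rw [hcc1] at h0
    rw [hpec, hcoe] at h0
    rw [hd, hdp]
    exact h0
  have D2 : d = dp * co + p * d := by
    have h0 := hδ pe (a * pe)
    rw [hcc2] at h0
    rw [hpec, hcoe] at h0
    rw [hd, hdp]
    exact h0
  have D1v : ∀ w, d w = d (p w) + co (dp w) := fun w => by
    have := DFunLike.congr_fun D1 w
    simpa [ContinuousLinearMap.mul_apply, ContinuousLinearMap.add_apply] using this
  have D2v : ∀ w, d w = dp (co w) + p (d w) := fun w => by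
    have := DFunLike.congr_fun D2 w
    simpa [ContinuousLinearMap.mul_apply, ContinuousLinearMap.add_apply] using this
  show d v = p (d (p v)) + q (dp (co v)) + co (dp (q v))
  have h1 : d v = d (p v) + d (q v) := by
    conv_lhs => rw [show v = p v + q v by rw [Pq]; abel]
    rw [map_add]
  have h2 : d (q v) = co (dp (q v)) := by
    have h0 := D1v (q v)
    rwa [Ppq, map_zero, zero_add] at h0
  have h4 : q (d (p v)) = q (dp (co v)) := by
    have h0 := congrArg q (D2v (p v))
    rw [map_add, Pqp, add_zero, Pcp] at h0
    exact h0
  have h5 : d (p v) = p (d (p v)) + q (d (p v)) := by rw [Pq]; abel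
  rw [h1, h2, ← h4, ← h5]

open ContinuousLinearMap in
/-- The diagonal-corner implementing operator `b''`. -/
theorem exists_bpp' {H : Type*} [NormedAddCommGroup H] [InnerProductSpace ℂ H]
    [CompleteSpace H] {S : Subalgebra ℂ (H →L[ℂ] H)}
    (δ : S →L[ℂ] (H →L[ℂ] H)) (hδ : IsDerivation S δ)
    {p : H →L[ℂ] H} (hpS : p ∈ S) (hpp : p * p = p) (hpa : adjoint p = p)
    (hlat : ∀ a ∈ S, a * p = p * a * p)
    (hcorner : ∀ x : H →L[ℂ] H, p * x * (1 - p) ∈ S) (hp1 : p ≠ 1) :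
    ∃ b'' : H →L[ℂ] H, ‖b''‖ ≤ ‖δ‖ ∧
      ∀ (a : S) (h : H),
        b'' (((a : H →L[ℂ] H) * p) h) =
          p ((δ (a * ⟨p, hpS⟩)) (p h)) + ((a : H →L[ℂ] H) * p) (b'' h) := by
  set q : H →L[ℂ] H := 1 - p with hqdef
  set pe : S := (⟨p, hpS⟩ : S) with hpe
  have hpec : (pe : H →L[ℂ] H) = p := rfl
  have Pp : ∀ v, p (p v) = p v := fun v => by
    simpa [ContinuousLinearMap.mul_apply] using DFunLike.congr_fun hpp v
  have Pq : ∀ v, q v = v - p v := fun v => by simp [hqdef]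
  have Ppq : ∀ v, p (q v) = 0 := fun v => by simp [Pq, map_sub, Pp]
  have Pqp : ∀ v, q (p v) = 0 := fun v => by simp [Pq, Pp]
  have Pqq : ∀ v, q (q v) = q v := fun v => by rw [Pq (q v), Ppq, sub_zero]
  have Plat : ∀ s : S, ∀ v, (s : H →L[ℂ] H) (p v) = p ((s : H →L[ℂ] H) (p v)) :=
    fun s v => by
      simpa [ContinuousLinearMap.mul_apply] using DFunLike.congr_fun (hlat s s.2) v
  have Ip : ∀ (v w : H), (inner ℂ (p v) w : ℂ) = inner ℂ v (p w) := fun v w => by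
    have := adjoint_inner_left p w v
    rwa [hpa] at this
  have normp : ∀ v, ‖p v‖ ≤ ‖v‖ := proj_apply_norm_le' hpp hpa
  -- choose a unit vector in the range of q
  have hq0 : q ≠ 0 := by
    intro h
    apply hp1
    have : (1 : H →L[ℂ] H) - p = 0 := h
    rw [sub_eq_zero] at this
    exact this.symm
  obtain ⟨v₀, hv₀⟩ : ∃ v, q v ≠ 0 := by
    by_contra h
    push_neg at h
    exact hq0 (ContinuousLinearMap.ext fun v => by simp [h v])
  set ξ : H := (‖q v₀‖ : ℂ)⁻¹ • q v₀ with hξdef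
  have hξ : ‖ξ‖ = 1 := by
    have hnz : ‖q v₀‖ ≠ 0 := norm_ne_zero_iff.mpr hv₀
    rw [hξdef, norm_smul]
    simp [hnz]
  have hqξ : q ξ = ξ := by rw [hξdef, map_smul, Pqq]
  have hpξ : p ξ = 0 := by rw [← hqξ, Ppq]
  have hinnerξ : (inner ℂ ξ ξ : ℂ) = 1 := by
    rw [inner_self_eq_norm_sq_to_K, hξ]; norm_num
  have hinnerpk : ∀ k, (inner ℂ ξ (p k) : ℂ) = 0 := fun k => by
    rw [← Ip, hpξ, inner_zero_left]
  have hinnerqk : ∀ k, (inner ℂ ξ (q k) : ℂ) = inner ℂ ξ k := fun k => by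
    rw [Pq, inner_sub_right, hinnerpk, sub_zero]
  -- rank one operators into the corner
  set Mop : H → (H →L[ℂ] H) := fun η => (innerSL ℂ ξ).smulRight η with hMop
  have hMopapp : ∀ η k, Mop η k = (inner ℂ ξ k : ℂ) • η := fun η k => by
    simp [hMop, smulRight_apply]
  have hMopmem : ∀ h : H, Mop (p h) ∈ S := by
    intro h
    have heq : Mop (p h) = p * (Mop (p h)) * q := by
      ext k
      rw [ContinuousLinearMap.mul_apply, ContinuousLinearMap.mul_apply, hMopapp, hMopapp,
        map_smul, hinnerqk, Pp]
    rw [heq]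
    exact hcorner _
  set Fc : H → S := fun h => (⟨Mop (p h), hMopmem h⟩ : S) with hFc
  have hFcc : ∀ h, ((Fc h : S) : H →L[ℂ] H) = Mop (p h) := fun h => rfl
  set blin : H →ₗ[ℂ] H :=
    { toFun := fun h => p ((δ (Fc h)) ξ)
      map_add' := by
        intro h h'
        show p ((δ (Fc (h + h'))) ξ) = p ((δ (Fc h)) ξ) + p ((δ (Fc h')) ξ)
        have : Fc (h + h') = Fc h + Fc h' := by
          apply Subtype.ext
          show Mop (p (h + h')) = Mop (p h) + Mop (p h')
          ext k
          rw [ContinuousLinearMap.add_apply, hMopapp, hMopapp, hMopapp, map_add, smul_add]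
        rw [this, map_add, ContinuousLinearMap.add_apply, map_add]
      map_smul' := by
        intro m h
        show p ((δ (Fc (m • h))) ξ) = m • p ((δ (Fc h)) ξ)
        have : Fc (m • h) = m • Fc h := by
          apply Subtype.ext
          show Mop (p (m • h)) = m • Mop (p h)
          ext k
          rw [ContinuousLinearMap.smul_apply, hMopapp, hMopapp, map_smul, smul_comm]
        rw [this, map_smul δ m (Fc h), ContinuousLinearMap.smul_apply,
          map_smul p m ((δ (Fc h)) ξ)] } with hblin
  have hFcnorm : ∀ h, ‖Fc h‖ ≤ ‖h‖ := by
    intro h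
    have : ‖Fc h‖ = ‖Mop (p h)‖ := rfl
    rw [this, hMop, norm_smulRight_apply, innerSL_apply_norm, hξ, one_mul]
    exact normp h
  have hbound : ∀ h, ‖blin h‖ ≤ ‖δ‖ * ‖h‖ := by
    intro h
    have h0 : blin h = p ((δ (Fc h)) ξ) := rfl
    calc ‖blin h‖ ≤ ‖(δ (Fc h)) ξ‖ := by rw [h0]; exact normp _
      _ ≤ ‖δ (Fc h)‖ * ‖ξ‖ := le_opNorm _ _
      _ = ‖δ (Fc h)‖ := by rw [hξ, mul_one]
      _ ≤ ‖δ‖ * ‖Fc h‖ := le_opNorm _ _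
      _ ≤ ‖δ‖ * ‖h‖ := mul_le_mul_of_nonneg_left (hFcnorm h) (norm_nonneg δ)
  refine ⟨blin.mkContinuous ‖δ‖ hbound, blin.mkContinuous_norm_le (norm_nonneg δ) hbound, ?_⟩
  intro a h
  set b'' : H →L[ℂ] H := blin.mkContinuous ‖δ‖ hbound with hb''def
  have hb''app : ∀ h, b'' h = p ((δ (Fc h)) ξ) := fun h => rfl
  set co : H →L[ℂ] H := (a : H →L[ℂ] H) * p with hco
  have Pco : ∀ v, co v = (a : H →L[ℂ] H) (p v) := fun v => by
    rw [hco, ContinuousLinearMap.mul_apply]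
  have Ppc : ∀ v, p (co v) = co v := fun v => by
    rw [Pco]; exact (Plat a v).symm
  have Pcp : ∀ v, co (p v) = co v := fun v => by rw [Pco, Pp, Pco]
  have hcoe : ((a * pe : S) : H →L[ℂ] H) = co := by
    rw [hco]; simp [hpec]
  have hFeq : Fc (co h) = (a * pe) * Fc h := by
    apply Subtype.ext
    show Mop (p (co h)) = ((a * pe : S) : H →L[ℂ] H) * Mop (p h)
    rw [hcoe]
    ext k
    calc Mop (p (co h)) k = (inner ℂ ξ k : ℂ) • p (co h) := hMopapp _ _
      _ = (inner ℂ ξ k : ℂ) • co h := by rw [Ppc]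
      _ = (inner ℂ ξ k : ℂ) • co (p h) := by rw [Pcp]
      _ = co ((inner ℂ ξ k : ℂ) • p h) := by rw [map_smul]
      _ = co (Mop (p h) k) := by rw [hMopapp]
      _ = (co * Mop (p h)) k := (ContinuousLinearMap.mul_apply _ _ _).symm
  have hMξ : Mop (p h) ξ = p h := by rw [hMopapp, hinnerξ, one_smul]
  rw [hb''app, hFeq, hδ (a * pe) (Fc h), ContinuousLinearMap.add_apply, map_add,
    ContinuousLinearMap.mul_apply, ContinuousLinearMap.mul_apply, hFcc, hMξ, hcoe]
  rw [Ppc, hb''app, Pcp]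

open ContinuousLinearMap in
/-- (Theorem 11.) For a bounded derivation `δ` on a maximal triangular algebra `S` and a
nontrivial `p ∈ lat(S)` (which consequently lies in `S`, since `lat(S) ⊆ S ∩ S*`),
there is `b₂ ∈ B(H)` with `‖b₂‖ ≤ 2‖δ‖` implementing `δ` on the algebra `S p = p S p`:
`δ(a p) = b₂ (a p) - (a p) b₂` for all `a ∈ S`. -/
theorem deriv_implemented_on_Sp {H : Type*} [NormedAddCommGroup H] [InnerProductSpace ℂ H]
    [CompleteSpace H] {S : Subalgebra ℂ (H →L[ℂ] H)} (hS : IsMaxTriangular S)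
    (δ : S →L[ℂ] (H →L[ℂ] H)) (hδ : IsDerivation S δ)
    {p : H →L[ℂ] H} (hp : InLat S p) (hp0 : p ≠ 0) (hp1 : p ≠ 1) (hpS : p ∈ S) :
    ∃ b₂ : H →L[ℂ] H, ‖b₂‖ ≤ 2 * ‖δ‖ ∧
      ∀ a : S, δ (a * ⟨p, hpS⟩) =
        b₂ * ((a : H →L[ℂ] H) * p) - ((a : H →L[ℂ] H) * p) * b₂ := by
  have hcorner : ∀ x : H →L[ℂ] H, p * x * (1 - p) ∈ S := corner_mem' hS hp hpS
  obtain ⟨hpp, hpa, hlat⟩ := hp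
  set pe : S := (⟨p, hpS⟩ : S) with hpe
  have hpec : (pe : H →L[ℂ] H) = p := rfl
  set q : H →L[ℂ] H := 1 - p with hqdef
  have Pp : ∀ v, p (p v) = p v := fun v => by
    simpa [ContinuousLinearMap.mul_apply] using DFunLike.congr_fun hpp v
  have Pq : ∀ v, q v = v - p v := fun v => by simp [hqdef]
  have Ppq : ∀ v, p (q v) = 0 := fun v => by simp [Pq, map_sub, Pp]
  have Pqp : ∀ v, q (p v) = 0 := fun v => by simp [Pq, Pp]
  have Plat : ∀ s : S, ∀ v, (s : H →L[ℂ] H) (p v) = p ((s : H →L[ℂ] H) (p v)) :=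
    fun s v => by
      simpa [ContinuousLinearMap.mul_apply] using DFunLike.congr_fun (hlat s s.2) v
  have normp : ∀ v, ‖p v‖ ≤ ‖v‖ := proj_apply_norm_le' hpp hpa
  have hpnorm : ‖p‖ ≤ 1 := opNorm_le_bound p zero_le_one fun v => by simpa using normp v
  obtain ⟨b'', hb''le, B1⟩ := exists_bpp' δ hδ hpS hpp hpa hlat hcorner hp1
  set dp : H →L[ℂ] H := δ pe with hdp
  have hdpnorm : ‖dp‖ ≤ ‖δ‖ := by
    calc ‖δ pe‖ ≤ ‖δ‖ * ‖pe‖ := le_opNorm δ pe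
      _ ≤ ‖δ‖ * 1 := mul_le_mul_of_nonneg_left hpnorm (norm_nonneg δ)
      _ = ‖δ‖ := mul_one _
  set b' : H →L[ℂ] H := q * dp * p - p * dp * q with hb'def
  have hb'app : ∀ v, b' v = q (dp (p v)) - p (dp (q v)) := fun v => by
    rw [hb'def]
    simp [ContinuousLinearMap.mul_apply, ContinuousLinearMap.sub_apply]
  have hb'le : ‖b'‖ ≤ ‖δ‖ := bprime_norm' hpp hpa dp ‖δ‖ hdpnorm
  refine ⟨b'' + b', ?_, ?_⟩
  · calc ‖b'' + b'‖ ≤ ‖b''‖ + ‖b'‖ := norm_add_le _ _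
      _ ≤ 2 * ‖δ‖ := by linarith
  intro a
  set co : H →L[ℂ] H := (a : H →L[ℂ] H) * p with hco
  set d : H →L[ℂ] H := δ (a * pe) with hd
  have Pco : ∀ v, co v = (a : H →L[ℂ] H) (p v) := fun v => by
    rw [hco, ContinuousLinearMap.mul_apply]
  have Ppc : ∀ v, p (co v) = co v := fun v => by
    rw [Pco]; exact (Plat a v).symm
  have Pcp : ∀ v, co (p v) = co v := fun v => by rw [Pco, Pp, Pco]
  have Pqc : ∀ v, q (co v) = 0 := fun v => by rw [Pco, Plat a, Pqp]
  have Pcq : ∀ v, co (q v) = 0 := fun v => by rw [Pco, Ppq, map_zero]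
  have E1 : ∀ v, d v = p (d (p v)) + q (dp (co v)) + co (dp (q v)) :=
    fun v => decomp' δ hδ hpS hpp hlat a v
  show d = (b'' + b') * co - co * (b'' + b')
  ext v
  have hb2c : (b'' + b') (co v) = p (d (p v)) + co (b'' v) + q (dp (co v)) := by
    rw [ContinuousLinearMap.add_apply, B1 a v, hb'app, Pqc, map_zero, map_zero, sub_zero, Ppc]
  have hcb2 : co ((b'' + b') v) = co (b'' v) - co (dp (q v)) := by
    rw [ContinuousLinearMap.add_apply, map_add, hb'app, map_sub]
    have e1 : co (q (dp (p v))) = 0 := Pcq _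
    have e2 : co (p (dp (q v))) = co (dp (q v)) := Pcp _
    rw [e1, e2, zero_sub]
    abel
  rw [ContinuousLinearMap.sub_apply, ContinuousLinearMap.mul_apply (b'' + b') co v,
    ContinuousLinearMap.mul_apply co (b'' + b') v, hb2c, hcb2, E1]
  abel
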